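/- arXiv:1709.04737 — 2 statements merged into one kernel-verified Lean document; each statement's English description precedes it below -/
import Mathlib

section
/- Let 0 < r₁ < r₂, λ < 0, α > 0, and let z : [r₁, r₂] → ℝ be a C¹ function satisfying z'(r) + z(r)² + z(r)/r + λ = 0 on [r₁, r₂], with z(r₁) = −α and z(r₂) = α. Then z'(r₂) > 0, i.e. λ + α² + α/r₂ < 0. -/
open Set Filter Topology

/-- if `z` is C¹ on `[r₁,r₂]` and satisfies the Riccati equation
`z' + z² + z/r + λ = 0` there, with `z(r₁) = −α` and `z(r₂) = α` (λ < 0, α > 0),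
then `z'(r₂) > 0`, i.e. `λ + α² + α/r₂ < 0`. -/
theorem riccati_derivative_positive_at_outer_radius
    (r₁ r₂ lam α : ℝ) (hr₁ : 0 < r₁) (hr : r₁ < r₂) (hlam : lam < 0) (hα : 0 < α)
    (z z' : ℝ → ℝ)
    (hz : ∀ r ∈ Icc r₁ r₂, HasDerivAt z (z' r) r)
    (hz'cont : ContinuousOn z' (Icc r₁ r₂))
    (hODE : ∀ r ∈ Icc r₁ r₂, z' r + (z r) ^ 2 + z r / r + lam = 0)
    (hb1 : z r₁ = -α) (hb2 : z r₂ = α) :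
    z' r₂ > 0 ∧ lam + α ^ 2 + α / r₂ < 0 := by
  have hr₂ : (0:ℝ) < r₂ := hr₁.trans hr
  have hmem₂ : r₂ ∈ Icc r₁ r₂ := ⟨hr.le, le_refl _⟩
  have hmem₁ : r₁ ∈ Icc r₁ r₂ := ⟨le_refl _, hr.le⟩
  have hode₂ : z' r₂ = -(lam + α ^ 2 + α / r₂) := by
    have := hODE r₂ hmem₂; rw [hb2] at this; linarith
  -- It suffices to prove the second statement
  suffices hK : lam + α ^ 2 + α / r₂ < 0 by
    refine ⟨?_, hK⟩; rw [hode₂]; linarith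
  by_contra hK
  push_neg at hK
  have hz'r₂ : z' r₂ ≤ 0 := by rw [hode₂]; linarith
  have hcont : ContinuousOn z (Icc r₁ r₂) :=
    fun r hrm => (hz r hrm).continuousAt.continuousWithinAt
  -- the first point where z = α
  set S : Set ℝ := {r ∈ Icc r₁ r₂ | z r = α} with hS
  have hSsub : S ⊆ Icc r₁ r₂ := fun r hr => hr.1
  have hSne : S.Nonempty := ⟨r₂, hmem₂, hb2⟩
  have hSclosed : IsClosed S :=
    hcont.preimage_isClosed_of_isClosed isClosed_Icc isClosed_singleton
  have hScompact : IsCompact S := isCompact_Icc.of_isClosed_subset hSclosed hSsub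
  set ρ := sInf S with hρ
  have hρS : ρ ∈ S := hScompact.sInf_mem hSne
  have hρIcc : ρ ∈ Icc r₁ r₂ := hρS.1
  have hρα : z ρ = α := hρS.2
  have hρ₁ : r₁ < ρ := by
    rcases lt_or_eq_of_le hρIcc.1 with h | h
    · exact h
    · exfalso; rw [← h, hb1] at hρα; linarith
  -- z < α strictly before ρ
  have hlt : ∀ r ∈ Ico r₁ ρ, z r < α := by
    intro r hrm
    by_contra hge
    push_neg at hge
    have hsub : Icc r₁ r ⊆ Icc r₁ r₂ :=
      Icc_subset_Icc (le_refl _) (hrm.2.le.trans hρIcc.2)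
    have : α ∈ Icc (z r₁) (z r) := by rw [hb1]; exact ⟨by linarith, hge⟩
    obtain ⟨c, hcmem, hc⟩ := intermediate_value_Icc hrm.1 (hcont.mono hsub) this
    have hcS : c ∈ S := ⟨hsub hcmem, hc⟩
    have : ρ ≤ c := csInf_le hScompact.bddBelow hcS
    have : c ≤ r := hcmem.2
    linarith [hrm.2]
  -- left derivative at ρ is nonnegative
  have hslope : Tendsto (slope z ρ) (𝓝[Ico r₁ ρ] ρ) (𝓝 (z' ρ)) := by
    have hd : HasDerivWithinAt z (z' ρ) (Ico r₁ ρ) ρ := (hz ρ hρIcc).hasDerivWithinAt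
    have := hasDerivWithinAt_iff_tendsto_slope.mp hd
    rwa [show Ico r₁ ρ \ {ρ} = Ico r₁ ρ by
      rw [diff_singleton_eq_self]; simp [mem_Ico]] at this
  have hne : (𝓝[Ico r₁ ρ] ρ).NeBot := by
    rw [nhdsWithin_Ico_eq_nhdsLT hρ₁]
    infer_instance
  have hz'ρ : 0 ≤ z' ρ := by
    refine ge_of_tendsto hslope ?_
    filter_upwards [eventually_mem_nhdsWithin] with r hrm
    have h1 : z r - z ρ < 0 := by have := hlt r hrm; rw [hρα]; linarith
    have h2 : r - ρ < 0 := by linarith [hrm.2]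
    have : 0 < (z r - z ρ) / (r - ρ) := div_pos_of_neg_of_neg h1 h2
    rw [slope_def_field]; exact this.le
  -- case ρ < r₂ : contradiction since z' ρ < 0
  rcases lt_or_eq_of_le hρIcc.2 with hρlt | hρeq
  · have hρ0 : 0 < ρ := hr₁.trans hρ₁
    have hode : z' ρ = -(lam + α ^ 2 + α / ρ) := by
      have := hODE ρ hρIcc; rw [hρα] at this; linarith
    have : α / r₂ < α / ρ := div_lt_div_of_pos_left hα hρ0 hρlt
    rw [hode] at hz'ρ; linarith
  -- case ρ = r₂ : second-derivative argument
  · rw [hρeq] at hlt hz'ρ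
    have hz'0 : z' r₂ = 0 := le_antisymm hz'r₂ hz'ρ
    -- g = RHS of ODE, has derivative α/r₂² at r₂
    set g : ℝ → ℝ := fun r => -(z r) ^ 2 - z r / r - lam with hg
    have hzg : ∀ r ∈ Icc r₁ r₂, z' r = g r := by
      intro r hrm; have := hODE r hrm; simp only [hg]; linarith
    have hderiv : HasDerivAt g (α / r₂ ^ 2) r₂ := by
      have h1 : HasDerivAt z (z' r₂) r₂ := hz r₂ hmem₂
      have h2 := (((h1.pow 2).neg.sub (h1.div (hasDerivAt_id r₂) hr₂.ne')).sub_const lam)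
      refine HasDerivAt.congr_deriv h2 ?_
      rw [hz'0, hb2]; simp only [id_eq]; field_simp; ring
    have hgw : HasDerivWithinAt z' (α / r₂ ^ 2) (Ico r₁ r₂) r₂ := by
      refine (hderiv.hasDerivWithinAt.mono Ico_subset_Icc_self).congr ?_ ?_
      · intro r hrm; exact hzg r (Ico_subset_Icc_self hrm)
      · exact hzg r₂ hmem₂
    have hslope2 : Tendsto (slope z' r₂) (𝓝[Ico r₁ r₂] r₂) (𝓝 (α / r₂ ^ 2)) := by
      have := hasDerivWithinAt_iff_tendsto_slope.mp hgw
      rwa [show Ico r₁ r₂ \ {r₂} = Ico r₁ r₂ by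
        rw [diff_singleton_eq_self]; simp [mem_Ico]] at this
    have hpos : (0:ℝ) < α / r₂ ^ 2 := div_pos hα (by positivity)
    have hev : ∀ᶠ r in 𝓝[Ico r₁ r₂] r₂, z' r < 0 := by
      filter_upwards [hslope2.eventually (eventually_gt_nhds hpos), eventually_mem_nhdsWithin]
        with r hsl hrm
      have h2 : r - r₂ < 0 := by linarith [hrm.2]
      rw [slope_def_field, hz'0, sub_zero] at hsl
      by_contra hge; push_neg at hge
      have := div_nonpos_of_nonneg_of_nonpos hge h2.le
      linarith
    rw [nhdsWithin_Ico_eq_nhdsLT hr] at hev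
    obtain ⟨a, ha, hsub⟩ := mem_nhdsLT_iff_exists_Ioo_subset.mp hev
    -- pick b ∈ (max a r₁, r₂)
    set b : ℝ := max a r₁ with hb
    have hbr₂ : b < r₂ := max_lt ha hr
    set b' : ℝ := (b + r₂) / 2 with hb'
    have hbb' : b < b' := by simp only [hb']; linarith
    have hb'r₂ : b' < r₂ := by simp only [hb']; linarith
    have hb'r₁ : r₁ ≤ b' := le_trans (le_max_right a r₁) hbb'.le
    have hsubIcc : Icc b' r₂ ⊆ Icc r₁ r₂ := Icc_subset_Icc hb'r₁ (le_refl _)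
    obtain ⟨c, hcmem, hc⟩ := exists_hasDerivAt_eq_slope z z' hb'r₂
      (hcont.mono hsubIcc)
      (fun x hx => hz x (hsubIcc (Ioo_subset_Icc_self hx)))
    have hzb' : z b' < α := hlt b' ⟨hb'r₁, hb'r₂⟩
    have hslpos : 0 < (z r₂ - z b') / (r₂ - b') := by
      apply div_pos; rw [hb2]; linarith; linarith
    have hcneg : z' c < 0 := hsub ⟨lt_of_le_of_lt (le_max_left a r₁) (hbb'.trans hcmem.1), hcmem.2⟩
    rw [hc] at hcneg; linarith
end

section
/- Let 0 < r₁ < r₂, λ < 0, α > 0, and let z : [r₁, r₂] → ℝ be C¹ with z' = −z² − z/r − λ, z(r₁) = −α, z(r₂) = α. Let ξ ∈ (r₁, r₂) satisfy z(ξ) = 0 and z(ρ) ≥ 0 for ρ ∈ [ξ, r₂]. Then z'(ρ) > 0 for all ρ ∈ [ξ, r₂]; in particular z is strictly increasing on [ξ, r₂]. -/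
open Set

/-- if `z` is C¹ with `z' = −z² − z/r − λ` on `[r₁,r₂]`, `z(r₁) = −α`,
`z(r₂) = α`, and `ξ ∈ (r₁,r₂)` satisfies `z(ξ) = 0` with `z ≥ 0` on `[ξ,r₂]`, then
`z' > 0` on `[ξ,r₂]`; in particular `z` is strictly increasing on `[ξ,r₂]`. -/
theorem riccati_strictly_increasing_after_zero
    (r₁ r₂ lam α : ℝ) (hr₁ : 0 < r₁) (hr : r₁ < r₂) (hlam : lam < 0) (hα : 0 < α)
    (z z' : ℝ → ℝ)
    (hz : ∀ r ∈ Icc r₁ r₂, HasDerivAt z (z' r) r)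
    (hz'cont : ContinuousOn z' (Icc r₁ r₂))
    (hODE : ∀ r ∈ Icc r₁ r₂, z' r = -(z r) ^ 2 - z r / r - lam)
    (hb1 : z r₁ = -α) (hb2 : z r₂ = α)
    (ξ : ℝ) (hξ : ξ ∈ Ioo r₁ r₂) (hzξ : z ξ = 0)
    (hznn : ∀ ρ ∈ Icc ξ r₂, 0 ≤ z ρ) :
    (∀ ρ ∈ Icc ξ r₂, 0 < z' ρ) ∧ StrictMonoOn z (Icc ξ r₂) := by
  obtain ⟨hξ1, hξ2⟩ := hξ
  have hsub : Icc ξ r₂ ⊆ Icc r₁ r₂ := Icc_subset_Icc hξ1.le le_rfl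
  have hξmem : ξ ∈ Icc r₁ r₂ := ⟨hξ1.le, hξ2.le⟩
  have hz'ξ : z' ξ = -lam := by
    have := hODE ξ hξmem
    simp [hzξ] at this
    linarith
  have key : ∀ ρ ∈ Icc ξ r₂, 0 < z' ρ := by
    by_contra hcon
    push_neg at hcon
    obtain ⟨ρ₁, hρ₁, hρ₁le⟩ := hcon
    set S : Set ℝ := {ρ ∈ Icc ξ r₂ | z' ρ ≤ 0} with hS
    have hSne : S.Nonempty := ⟨ρ₁, hρ₁, hρ₁le⟩
    have hSclosed : IsClosed S := by
      have : S = Icc ξ r₂ ∩ z' ⁻¹' Iic 0 := by ext x; simp [hS, and_comm]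
      rw [this]
      exact (hz'cont.mono hsub).preimage_isClosed_of_isClosed isClosed_Icc isClosed_Iic
    have hSbdd : BddBelow S := ⟨ξ, fun x hx => hx.1.1⟩
    set ρ₀ := sInf S with hρ₀def
    have hρ₀S : ρ₀ ∈ S := hSclosed.csInf_mem hSne hSbdd
    have hρ₀mem : ρ₀ ∈ Icc ξ r₂ := hρ₀S.1
    have hρ₀le : z' ρ₀ ≤ 0 := hρ₀S.2
    have hρ₀r : ρ₀ ∈ Icc r₁ r₂ := hsub hρ₀mem
    have hρ₀pos : 0 < ρ₀ := lt_of_lt_of_le hr₁ hρ₀r.1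
    have hξρ₀ : ξ < ρ₀ := by
      rcases lt_or_eq_of_le hρ₀mem.1 with h | h
      · exact h
      · exfalso; rw [← h] at hρ₀le; rw [hz'ξ] at hρ₀le; linarith
    -- z' t > 0 for t ∈ [ξ, ρ₀)
    have hpos : ∀ t ∈ Ico ξ ρ₀, 0 < z' t := by
      intro t ht
      by_contra h
      push_neg at h
      have htS : t ∈ S := ⟨⟨ht.1, ht.2.le.trans hρ₀mem.2⟩, h⟩
      exact absurd (csInf_le hSbdd htS) (not_le.mpr ht.2)
    -- z ρ₀ > 0
    have hzρ₀pos : 0 < z ρ₀ := by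
      rcases lt_or_eq_of_le (hznn ρ₀ hρ₀mem) with h | h
      · exact h
      · exfalso
        have := hODE ρ₀ hρ₀r
        rw [← h] at this
        simp at this
        rw [this] at hρ₀le
        linarith
    -- derivative of z' at ρ₀ within Icc r₁ r₂, via the ODE expression
    have hzd : HasDerivAt z (z' ρ₀) ρ₀ := hz ρ₀ hρ₀r
    set d : ℝ := -(2 * z ρ₀ * z' ρ₀) - (z' ρ₀ * ρ₀ - z ρ₀) / ρ₀ ^ 2 with hd
    have hgd : HasDerivAt (fun r => -(z r) ^ 2 - z r / r - lam) d ρ₀ := by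
      have h1 : HasDerivAt (fun r => -(z r) ^ 2) (-(2 * z ρ₀ * z' ρ₀)) ρ₀ := by
        have : HasDerivAt (fun r => -(z r) ^ 2) _ ρ₀ := (hzd.pow 2).neg
        convert this using 1
        ring
      have h2 : HasDerivAt (fun r => z r / r) ((z' ρ₀ * ρ₀ - z ρ₀) / ρ₀ ^ 2) ρ₀ := by
        have : HasDerivAt (fun r => z r / r) _ ρ₀ := hzd.div (hasDerivAt_id ρ₀) (ne_of_gt hρ₀pos)
        convert this using 1
        simp [div_eq_mul_inv]
      have := (h1.sub h2).sub_const lam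
      exact this
    have hz'd : HasDerivWithinAt z' d (Icc r₁ r₂) ρ₀ :=
      (hgd.hasDerivWithinAt).congr (fun x hx => hODE x hx) (hODE ρ₀ hρ₀r)
    have hdpos : 0 < d := by
      rw [hd]
      have h1 : 0 < z ρ₀ / ρ₀ ^ 2 := div_pos hzρ₀pos (pow_pos hρ₀pos 2)
      have h2 : z' ρ₀ * ρ₀ ≤ 0 := mul_nonpos_of_nonpos_of_nonneg hρ₀le hρ₀pos.le
      have h3 : 0 ≤ -(2 * z ρ₀ * z' ρ₀) := by nlinarith
      have : (z' ρ₀ * ρ₀ - z ρ₀) / ρ₀ ^ 2 ≤ (0 - z ρ₀) / ρ₀ ^ 2 := by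
        apply div_le_div_of_nonneg_right _ (pow_pos hρ₀pos 2).le
        · linarith
      calc (0:ℝ) < z ρ₀ / ρ₀ ^ 2 := h1
        _ = 0 - (0 - z ρ₀) / ρ₀ ^ 2 := by ring
        _ ≤ -(2 * z ρ₀ * z' ρ₀) - (z' ρ₀ * ρ₀ - z ρ₀) / ρ₀ ^ 2 := by
            apply sub_le_sub h3 this
    -- slope argument: just left of ρ₀, z' t < z' ρ₀ ≤ 0, contradiction
    have hslope := hasDerivWithinAt_iff_tendsto_slope.mp hz'd
    have hsubset : Ico ξ ρ₀ ⊆ (Icc r₁ r₂ \ {ρ₀}) := by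
      intro t ht
      exact ⟨⟨hξ1.le.trans ht.1, ht.2.le.trans hρ₀r.2⟩, ne_of_lt ht.2⟩
    have htend : Filter.Tendsto (slope z' ρ₀) (nhdsWithin ρ₀ (Ico ξ ρ₀)) (nhds d) :=
      hslope.mono_left (nhdsWithin_mono ρ₀ hsubset)
    have hne : (nhdsWithin ρ₀ (Ico ξ ρ₀)).NeBot := right_nhdsWithin_Ico_neBot hξρ₀
    have hev : ∀ᶠ t in nhdsWithin ρ₀ (Ico ξ ρ₀), 0 < slope z' ρ₀ t :=
      htend.eventually (eventually_gt_nhds hdpos)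
    have hev2 : ∀ᶠ t in nhdsWithin ρ₀ (Ico ξ ρ₀), t ∈ Ico ξ ρ₀ :=
      eventually_mem_nhdsWithin
    obtain ⟨t, ht1, ht2⟩ := (hev.and hev2).exists
    have htlt : t < ρ₀ := ht2.2
    have hq : 0 < (z' t - z' ρ₀) / (t - ρ₀) := by
      rw [slope_def_field] at ht1; exact ht1
    have hden : t - ρ₀ < 0 := by linarith
    have hlt : z' t - z' ρ₀ < 0 := by
      by_contra h
      push_neg at h
      have : (z' t - z' ρ₀) / (t - ρ₀) ≤ 0 := div_nonpos_of_nonneg_of_nonpos h hden.le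
      linarith
    have := hpos t ht2
    linarith
  refine ⟨key, ?_⟩
  apply strictMonoOn_of_deriv_pos (convex_Icc ξ r₂)
  · intro x hx
    exact (hz x (hsub hx)).continuousAt.continuousWithinAt
  · intro x hx
    rw [interior_Icc] at hx
    have hxm : x ∈ Icc ξ r₂ := ⟨hx.1.le, hx.2.le⟩
    rw [(hz x (hsub hxm)).deriv]
    exact key x hxm
end
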